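/- Define U^(3)(r) := U(r) − ∫_1^∞ U(t·r)·t^{−2} dt and W^(3)(r) := (1/(2π)) · r^{−3} · ∫_0^r U^(3)(t)·t dt for r > 0. Then: (i) U^(3)(r) = r/π for 0 < r ≤ 1 and U^(3)(r) = (r − √(r²−1))/π for r > 1; (ii) W^(3)(r) = 1/(6π²) for 0 < r ≤ 1 and W^(3)(r) = (1/(6π²))·(1 − (r²−1)^{3/2}/r³) for r > 1. -/

import Mathlib

open MeasureTheory Filter Set Topology

/-- The limiting profile `U`. -/
noncomputable def U (r : ℝ) : ℝ :=
  if r ≤ 1 then 1 / 2 else 1 / 2 - Real.arccos (1 / r) / Real.pi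

/-- The dimension-3 profile `U^(3)`. -/
noncomputable def U3 (r : ℝ) : ℝ :=
  U r - ∫ t in Set.Ioi (1:ℝ), U (t * r) * t ^ (-2 : ℝ)

/-- The dimension-3 Shannon density profile `W^(3)`. -/
noncomputable def W3 (r : ℝ) : ℝ :=
  (1 / (2 * Real.pi)) * r ^ (-3 : ℝ) * ∫ t in (0:ℝ)..r, U3 t * t

noncomputable def Fa (r t : ℝ) : ℝ :=
  (-1/2) * t⁻¹ + (1/Real.pi) * (Real.arccos (1/(t*r)) / t - r * Real.sqrt (1 - (1/(t*r))^2))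

lemma hasDerivAt_Fa {r t : ℝ} (hr : 0 < r) (ht : 0 < t) (h1 : 1 < t * r) :
    HasDerivAt (Fa r) ((1/2 - Real.arccos (1/(t*r))/Real.pi) / t^2) t := by
  have hpi := Real.pi_pos
  have htr : 0 < t * r := lt_trans one_pos h1
  have hu1 : 1/(t*r) < 1 := by rw [div_lt_one htr]; exact h1
  have hu0 : 0 < 1/(t*r) := by positivity
  have hu : HasDerivAt (fun t => 1/(t*r)) (-(1*r)/(t*r)^2) t := by
    have h := ((hasDerivAt_id t).mul_const r).inv (ne_of_gt htr)
    simpa [one_div, Pi.inv_def] using h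
  have hA : HasDerivAt (fun t => Real.arccos (1/(t*r)))
      (-(1 / Real.sqrt (1 - (1/(t*r))^2)) * (-(1*r)/(t*r)^2)) t := by
    have := (Real.hasDerivAt_arccos (ne_of_gt (by linarith : (-1:ℝ) < 1/(t*r))) (ne_of_lt hu1)).comp t hu
    simpa [Function.comp_def] using this
  have hAd : HasDerivAt (fun t => Real.arccos (1/(t*r)) / t)
      (((-(1 / Real.sqrt (1 - (1/(t*r))^2)) * (-(1*r)/(t*r)^2)) * t - Real.arccos (1/(t*r)) * 1) / t^2) t :=
    hA.div (hasDerivAt_id t) (ne_of_gt ht)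
  have hv : HasDerivAt (fun t => 1 - (1/(t*r))^2)
      (-((2:ℕ) * (1/(t*r))^(2-1) * (-(1*r)/(t*r)^2))) t := (hu.pow 2).const_sub 1
  have hvpos : 0 < 1 - (1/(t*r))^2 := by nlinarith
  have hS : HasDerivAt (fun t => Real.sqrt (1 - (1/(t*r))^2))
      ((-((2:ℕ) * (1/(t*r))^(2-1) * (-(1*r)/(t*r)^2))) / (2 * Real.sqrt (1 - (1/(t*r))^2))) t :=
    hv.sqrt (ne_of_gt hvpos)
  have hAS : HasDerivAt (fun t => Real.arccos (1/(t*r)) / t - r * Real.sqrt (1 - (1/(t*r))^2))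
      (-(Real.arccos (1/(t*r))) / t^2) t := by
    have h := hAd.sub (hS.const_mul r)
    refine h.congr_deriv (Eq.symm ?_)
    have hs0 : 0 < Real.sqrt (1 - (1/(t*r))^2) := Real.sqrt_pos.mpr hvpos
    generalize Real.sqrt (1 - (1/(t*r))^2) = s at hs0 ⊢
    have := ht.ne'
    have := hr.ne'
    norm_num
    field_simp
    ring
  have h0 : HasDerivAt (fun x : ℝ => (-1/2) * x⁻¹) ((-1/2) * (-(t^2)⁻¹)) t :=
    (hasDerivAt_inv (ne_of_gt ht)).const_mul _
  have h := h0.add (hAS.const_mul (1/Real.pi))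
  refine h.congr_deriv (Eq.symm ?_)
  field_simp
  ring

lemma continuousOn_Fa {r a : ℝ} (hr : 0 < r) (ha : 0 < a) : ContinuousOn (Fa r) (Ici a) := by
  have hne : ∀ x ∈ Ici a, x ≠ 0 := fun x hx => ne_of_gt (lt_of_lt_of_le ha hx)
  apply ContinuousOn.add
  · exact continuousOn_const.mul (continuousOn_id.inv₀ hne)
  · apply ContinuousOn.mul continuousOn_const
    apply ContinuousOn.sub
    · exact (Real.continuous_arccos.comp_continuousOn
        (continuousOn_const.div (continuousOn_id.mul continuousOn_const)
          (fun x hx => mul_ne_zero (hne x hx) hr.ne'))).div continuousOn_id hne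
    · exact continuousOn_const.mul (Real.continuous_sqrt.comp_continuousOn
        (continuousOn_const.sub ((continuousOn_const.div (continuousOn_id.mul continuousOn_const)
          (fun x hx => mul_ne_zero (hne x hx) hr.ne')).pow 2)))

lemma tendsto_Fa {r : ℝ} (hr : 0 < r) : Tendsto (Fa r) atTop (𝓝 (-(r/Real.pi))) := by
  have l1 : Tendsto (fun t : ℝ => t⁻¹) atTop (𝓝 0) := tendsto_inv_atTop_zero
  have l2 : Tendsto (fun t : ℝ => 1/(t*r)) atTop (𝓝 0) := by
    exact (Tendsto.atTop_mul_const hr tendsto_id).inv_tendsto_atTop.congr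
      fun x => (one_div _).symm
  have l3 : Tendsto (fun t : ℝ => Real.arccos (1/(t*r))) atTop (𝓝 (Real.pi/2)) := by
    have := (Real.continuous_arccos.tendsto 0).comp l2
    simpa [Function.comp_def, Real.arccos_zero] using this
  have l4 : Tendsto (fun t : ℝ => Real.sqrt (1 - (1/(t*r))^2)) atTop (𝓝 1) := by
    have h := (tendsto_const_nhds : Tendsto (fun _ : ℝ => (1:ℝ)) atTop (𝓝 1)).sub (l2.pow 2)
    have := (Real.continuous_sqrt.tendsto ((1:ℝ) - 0^2)).comp h
    simpa [Function.comp_def] using this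
  have : Tendsto (Fa r) atTop
      (𝓝 ((-1/2) * 0 + (1/Real.pi) * ((Real.pi/2) * 0 - r * 1))) := by
    apply Tendsto.add ((tendsto_const_nhds.mul l1))
    apply Tendsto.const_mul
    exact ((l3.mul l1).congr fun x => (div_eq_mul_inv _ _).symm).sub (tendsto_const_nhds.mul l4)
  have e : (-1/2 : ℝ) * 0 + (1/Real.pi) * ((Real.pi/2) * 0 - r * 1) = -(r/Real.pi) := by ring
  rwa [e] at this

lemma integrand_eq {r a : ℝ} (hr : 0 < r) (ha : 0 < a) (har : 1 ≤ a * r) :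
    ∀ t ∈ Ioi a, U (t * r) * t ^ (-2:ℝ) = (1/2 - Real.arccos (1/(t*r))/Real.pi) / t^2 := by
  intro t ht
  have ht0 : 0 < t := lt_trans ha ht
  have h1 : 1 < t * r := lt_of_le_of_lt har (mul_lt_mul_of_pos_right ht hr)
  rw [U, if_neg (not_le.mpr h1),
    show (-2:ℝ) = -((2:ℕ):ℝ) by norm_num, Real.rpow_neg ht0.le, Real.rpow_natCast]
  ring

lemma deriv_nonneg {u x : ℝ} (hu : 0 ≤ u) : 0 ≤ (1/2 - Real.arccos u / Real.pi) / x^2 := by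
  apply div_nonneg _ (sq_nonneg x)
  have h := Real.arccos_le_pi_div_two.mpr hu
  have hπ := Real.pi_pos
  have h2 : Real.arccos u / Real.pi ≤ (Real.pi/2)/Real.pi := (div_le_div_iff_of_pos_right hπ).mpr h
  have h3 : (Real.pi/2)/Real.pi = 1/2 := by field_simp
  linarith [h2, h3 ▸ h2]

lemma integral_tail {r a : ℝ} (hr : 0 < r) (ha : 0 < a) (har : 1 ≤ a * r) :
    (∫ t in Ioi a, U (t * r) * t ^ (-2:ℝ)) = -(r/Real.pi) - Fa r a :=  by
  rw [setIntegral_congr_fun measurableSet_Ioi (integrand_eq hr ha har)]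
  exact integral_Ioi_of_hasDerivAt_of_nonneg
    ((continuousOn_Fa hr ha).continuousWithinAt self_mem_Ici)
    (fun x hx => hasDerivAt_Fa hr (lt_trans ha hx)
      (lt_of_le_of_lt har (mul_lt_mul_of_pos_right hx hr)))
    (fun x hx => deriv_nonneg (by
      have : 0 < x * r := by nlinarith [lt_trans ha hx]
      positivity))
    (tendsto_Fa hr)

lemma integrable_tail {r a : ℝ} (hr : 0 < r) (ha : 0 < a) (har : 1 ≤ a * r) :
    IntegrableOn (fun t => U (t * r) * t ^ (-2:ℝ)) (Ioi a) := by
  have h := integrableOn_Ioi_deriv_of_nonneg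
    ((continuousOn_Fa hr ha).continuousWithinAt self_mem_Ici)
    (fun x hx => hasDerivAt_Fa hr (lt_trans ha hx)
      (lt_of_le_of_lt har (mul_lt_mul_of_pos_right hx hr)))
    (fun x hx => deriv_nonneg (by
      have : 0 < x * r := by nlinarith [lt_trans ha hx]
      positivity))
    (tendsto_Fa hr)
  exact h.congr_fun (fun t ht => (integrand_eq hr ha har t ht).symm) measurableSet_Ioi

lemma sqrt_aux {r : ℝ} (hr : 1 ≤ r) : Real.sqrt (1 - (1/r)^2) = Real.sqrt (r^2-1)/r := by
  have hr0 : 0 < r := lt_of_lt_of_le one_pos hr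
  rw [show 1 - (1/r)^2 = (r^2-1)/r^2 by field_simp,
    Real.sqrt_div (by nlinarith : (0:ℝ) ≤ r^2 - 1), Real.sqrt_sq hr0.le]

lemma U3_gt {r : ℝ} (hr : 1 < r) : U3 r = (r - Real.sqrt (r^2-1))/Real.pi := by
  have hr0 : 0 < r := lt_trans one_pos hr
  have hπ := Real.pi_pos
  rw [U3, integral_tail hr0 one_pos (by simpa using hr.le), U, if_neg (not_le.mpr hr)]
  simp only [Fa, one_mul, inv_one, div_one]
  rw [sqrt_aux hr.le]
  field_simp
  ring

lemma Fa_at_inv {r : ℝ} (hr : 0 < r) : Fa r (1/r) = -(r/2) := by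
  have h : (1/r) * r = 1 := one_div_mul_cancel hr.ne'
  rw [Fa, h]
  norm_num [Real.arccos_one]
  ring

lemma U3_le {r : ℝ} (hr0 : 0 < r) (hr1 : r ≤ 1) : U3 r = r / Real.pi := by
  have hπ := Real.pi_pos
  have h1r : (1:ℝ) ≤ 1/r := by rw [le_div_iff₀ hr0]; linarith
  have hinv : 0 < 1/r := by positivity
  have hprod : (1:ℝ) ≤ (1/r) * r := by rw [one_div_mul_cancel hr0.ne']
  have hsplit : Ioc (1:ℝ) (1/r) ∪ Ioi (1/r) = Ioi 1 := Ioc_union_Ioi_eq_Ioi h1r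
  have eq1 : ∀ t ∈ Ioc (1:ℝ) (1/r), U (t * r) * t ^ (-2:ℝ) = (1/2) / t^2 := by
    intro t ht
    have ht0 : 0 < t := lt_trans one_pos ht.1
    have htr : t * r ≤ 1 := by
      calc t * r ≤ (1/r) * r := mul_le_mul_of_nonneg_right ht.2 hr0.le
      _ = 1 := by field_simp
    rw [U, if_pos htr,
      show (-2:ℝ) = -((2:ℕ):ℝ) by norm_num, Real.rpow_neg ht0.le, Real.rpow_natCast]
    ring
  have contg : ContinuousOn (fun t : ℝ => (1/2) / t^2) (Icc 1 (1/r)) :=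
    continuousOn_const.div (continuousOn_pow 2)
      (fun x hx => pow_ne_zero 2 (ne_of_gt (lt_of_lt_of_le one_pos hx.1)))
  have hInt1 : IntegrableOn (fun t => U (t * r) * t ^ (-2:ℝ)) (Ioc 1 (1/r)) :=
    ((contg.integrableOn_Icc).mono_set Ioc_subset_Icc_self).congr_fun
      (fun t ht => (eq1 t ht).symm) measurableSet_Ioc
  have hInt2 : IntegrableOn (fun t => U (t * r) * t ^ (-2:ℝ)) (Ioi (1/r)) :=
    integrable_tail hr0 hinv hprod
  have hIoc : (∫ t in Ioc (1:ℝ) (1/r), U (t * r) * t ^ (-2:ℝ)) = 1/2 - r/2 := by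
    rw [setIntegral_congr_fun measurableSet_Ioc eq1, ← intervalIntegral.integral_of_le h1r]
    have := intervalIntegral.integral_eq_sub_of_hasDerivAt (f := fun x : ℝ => (-1/2) * x⁻¹)
      (f' := fun x : ℝ => (1/2) / x^2) (a := 1) (b := 1/r)
      (fun x hx => by
        rw [uIcc_of_le h1r] at hx
        have hx0 : 0 < x := lt_of_lt_of_le one_pos hx.1
        have h := (hasDerivAt_inv hx0.ne').const_mul ((-1:ℝ)/2)
        refine h.congr_deriv (Eq.symm ?_)
        field_simp)
      (by
        apply ContinuousOn.intervalIntegrable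
        rw [uIcc_of_le h1r]
        exact contg)
    rw [this]
    show (-1/2 : ℝ) * (1/r)⁻¹ - (-1/2 : ℝ) * (1:ℝ)⁻¹ = 1/2 - r/2
    rw [one_div, inv_inv]
    norm_num
    ring
  rw [U3, U, if_pos hr1, ← hsplit,
    setIntegral_union (Ioc_disjoint_Ioi le_rfl) measurableSet_Ioi hInt1 hInt2,
    hIoc, integral_tail hr0 hinv hprod, Fa_at_inv hr0]
  field_simp
  ring

lemma int_low {r : ℝ} (hr0 : 0 ≤ r) (hr1 : r ≤ 1) :
    ∫ t in (0:ℝ)..r, U3 t * t = r^3/(3*Real.pi) := by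
  have heq : EqOn (fun t : ℝ => U3 t * t) (fun t : ℝ => t^2 / Real.pi) (uIcc 0 r) := by
    intro t ht
    rw [uIcc_of_le hr0] at ht
    rcases eq_or_lt_of_le ht.1 with h | h
    · simp [← h]
    · show U3 t * t = t^2/Real.pi
      rw [U3_le h (le_trans ht.2 hr1)]
      ring
  rw [intervalIntegral.integral_congr heq, intervalIntegral.integral_div, integral_pow]
  norm_num
  ring

lemma int_high {r : ℝ} (hr : 1 ≤ r) :
    ∫ t in (1:ℝ)..r, U3 t * t
      = (r^3 - (r^2-1)*Real.sqrt (r^2-1) - 1)/(3*Real.pi) := by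
  have hπ := Real.pi_pos
  have heq : EqOn (fun t : ℝ => U3 t * t)
      (fun t : ℝ => (t - Real.sqrt (t^2-1))*t/Real.pi) (uIcc 1 r) := by
    intro t ht
    rw [uIcc_of_le hr] at ht
    rcases eq_or_lt_of_le ht.1 with h | h
    · rw [← h]
      norm_num [U3_le one_pos le_rfl]
    · show U3 t * t = (t - Real.sqrt (t^2-1))*t/Real.pi
      rw [U3_gt h]
      ring
  rw [intervalIntegral.integral_congr heq]
  have hc : Continuous (fun t : ℝ => (t^3/3 - (t^2-1)*Real.sqrt (t^2-1)/3)/Real.pi) := by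
    apply Continuous.div_const
    apply Continuous.sub ((continuous_pow 3).div_const 3)
    apply Continuous.div_const
    exact ((continuous_pow 2).sub continuous_const).mul
      (Real.continuous_sqrt.comp ((continuous_pow 2).sub continuous_const))
  have hcg : Continuous (fun t : ℝ => (t - Real.sqrt (t^2-1))*t/Real.pi) := by
    apply Continuous.div_const
    exact (continuous_id.sub (Real.continuous_sqrt.comp
      ((continuous_pow 2).sub continuous_const))).mul continuous_id
  have key := intervalIntegral.integral_eq_sub_of_hasDerivAt_of_le hr
    (f := fun t : ℝ => (t^3/3 - (t^2-1)*Real.sqrt (t^2-1)/3)/Real.pi)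
    (f' := fun t : ℝ => (t - Real.sqrt (t^2-1))*t/Real.pi)
    hc.continuousOn
    (by
      intro x hx
      have hx1 : 1 < x := hx.1
      have hpos : 0 < x^2 - 1 := by nlinarith
      have h1 : HasDerivAt (fun t : ℝ => t^3) (3 * x^2) x := by
        simpa using hasDerivAt_pow 3 x
      have hq : HasDerivAt (fun t : ℝ => t^2 - 1) (2 * x) x := by
        simpa using (hasDerivAt_pow 2 x).sub_const 1
      have hs : HasDerivAt (fun t : ℝ => Real.sqrt (t^2-1))
          ((2*x) / (2*Real.sqrt (x^2-1))) x := hq.sqrt hpos.ne'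
      have hall := ((h1.div_const 3).sub ((hq.mul hs).div_const 3)).div_const Real.pi
      refine hall.congr_deriv (Eq.symm ?_)
      have hs0 : 0 < Real.sqrt (x^2-1) := Real.sqrt_pos.mpr hpos
      have hs2 : Real.sqrt (x^2-1)^2 = x^2-1 := Real.sq_sqrt hpos.le
      set s := Real.sqrt (x^2-1) with hsdef
      field_simp
      linear_combination (-1)*hs2)
    (hcg.intervalIntegrable 1 r)
  rw [key]
  norm_num [Real.sqrt_zero]
  ring

lemma rpow_neg3 {r : ℝ} (hr : 0 < r) : r ^ (-3:ℝ) = (r^3)⁻¹ := by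
  rw [show (-3:ℝ) = -((3:ℕ):ℝ) by norm_num, Real.rpow_neg hr.le, Real.rpow_natCast]

lemma W3_le {r : ℝ} (hr0 : 0 < r) (hr1 : r ≤ 1) : W3 r = 1/(6*Real.pi^2) := by
  have hπ := Real.pi_pos
  rw [W3, int_low hr0.le hr1, rpow_neg3 hr0]
  field_simp
  ring

lemma W3_gt {r : ℝ} (hr : 1 < r) :
    W3 r = (1 / (6 * Real.pi ^ 2)) * (1 - (r ^ 2 - 1) ^ ((3:ℝ)/2) / r ^ 3) := by
  have hπ := Real.pi_pos
  have hr0 : 0 < r := lt_trans one_pos hr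
  have h01 : IntervalIntegrable (fun t : ℝ => U3 t * t) volume 0 1 := by
    rw [intervalIntegrable_iff_integrableOn_Ioc_of_le zero_le_one]
    have h : IntegrableOn (fun t : ℝ => t^2/Real.pi) (Ioc (0:ℝ) 1) :=
      Continuous.integrableOn_Ioc (by continuity)
    exact h.congr_fun (fun t ht => by
      show t^2/Real.pi = U3 t * t
      rw [U3_le ht.1 ht.2]; ring) measurableSet_Ioc
  have h1r : IntervalIntegrable (fun t : ℝ => U3 t * t) volume 1 r := by
    rw [intervalIntegrable_iff_integrableOn_Ioc_of_le hr.le]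
    have h : IntegrableOn (fun t : ℝ => (t - Real.sqrt (t^2-1))*t/Real.pi) (Ioc (1:ℝ) r) :=
      Continuous.integrableOn_Ioc (by
        apply Continuous.div_const
        exact (continuous_id.sub (Real.continuous_sqrt.comp
          ((continuous_pow 2).sub continuous_const))).mul continuous_id)
    exact h.congr_fun (fun t ht => by
      show (t - Real.sqrt (t^2-1))*t/Real.pi = U3 t * t
      rw [U3_gt ht.1]; ring) measurableSet_Ioc
  have hrpow : (r^2-1) ^ ((3:ℝ)/2) = (r^2-1) * Real.sqrt (r^2-1) := by
    rw [show (3:ℝ)/2 = 1 + 1/2 by norm_num, Real.rpow_add (by nlinarith), Real.rpow_one,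
      ← Real.sqrt_eq_rpow]
  rw [W3, ← intervalIntegral.integral_add_adjacent_intervals h01 h1r,
    int_low zero_le_one le_rfl, int_high hr.le, rpow_neg3 hr0, hrpow]
  field_simp
  ring_nf
  try exact Or.inl trivial

theorem U3_W3_piecewise (r : ℝ) :
    (0 < r → r ≤ 1 → U3 r = r / Real.pi) ∧
    (1 < r → U3 r = (r - Real.sqrt (r ^ 2 - 1)) / Real.pi) ∧
    (0 < r → r ≤ 1 → W3 r = 1 / (6 * Real.pi ^ 2)) ∧
    (1 < r →
      W3 r = (1 / (6 * Real.pi ^ 2)) * (1 - (r ^ 2 - 1) ^ ((3:ℝ)/2) / r ^ 3)) := by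
  exact ⟨fun h1 h2 => U3_le h1 h2, fun h => U3_gt h, fun h1 h2 => W3_le h1 h2, fun h => W3_gt h⟩
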